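/- Let s ≥ 0, β ∈ (1/2, 1). There exists C = C(s) such that for nonzero l, m, k ∈ ℤ² with l + m + k = 0 and |l| ≤ |m| ≤ |k|, one has (1/|l|^{2β})(|k|^{2s} − |m|^{2s}) ≤ C |l|^{1−2β} |m|^{s−1} |k|^{s}. -/

import Mathlib

/-- The Euclidean norm of a lattice vector in ℤ². -/
noncomputable def znorm (v : ℤ × ℤ) : ℝ := Real.sqrt ((v.1 : ℝ) ^ 2 + (v.2 : ℝ) ^ 2)

lemma znorm_nonneg (v : ℤ × ℤ) : 0 ≤ znorm v := Real.sqrt_nonneg _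

lemma znorm_pos {v : ℤ × ℤ} (hv : v ≠ 0) : 0 < znorm v := by
  apply Real.sqrt_pos.2
  have h : v.1 ≠ 0 ∨ v.2 ≠ 0 := by
    by_contra h
    push_neg at h
    exact hv (Prod.ext h.1 h.2)
  have h1 : (0:ℝ) ≤ (v.1 : ℝ)^2 := sq_nonneg _
  have h2 : (0:ℝ) ≤ (v.2 : ℝ)^2 := sq_nonneg _
  rcases h with h | h
  · have h' : (v.1 : ℝ) ≠ 0 := Int.cast_ne_zero.2 h
    have : (0:ℝ) < (v.1:ℝ)^2 := by positivity
    linarith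
  · have h' : (v.2 : ℝ) ≠ 0 := Int.cast_ne_zero.2 h
    have : (0:ℝ) < (v.2:ℝ)^2 := by positivity
    linarith

lemma znorm_sq (v : ℤ × ℤ) : znorm v ^ 2 = (v.1 : ℝ)^2 + (v.2 : ℝ)^2 :=
  Real.sq_sqrt (by positivity)

lemma znorm_triangle (l m : ℤ × ℤ) : znorm (l + m) ≤ znorm l + znorm m := by
  have h1 := znorm_nonneg l
  have h2 := znorm_nonneg m
  have e1 := znorm_sq l
  have e2 := znorm_sq m
  have hcs : ((l.1:ℝ) * m.1 + (l.2:ℝ) * m.2) ≤ znorm l * znorm m := by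
    nlinarith [sq_nonneg ((l.1:ℝ) * m.2 - (l.2:ℝ) * m.1), mul_nonneg h1 h2,
      sq_nonneg ((l.1:ℝ) * m.1 + (l.2:ℝ) * m.2 - znorm l * znorm m)]
  have hX : ((l+m).1 : ℝ)^2 + ((l+m).2 : ℝ)^2 ≤ (znorm l + znorm m)^2 := by
    rw [Prod.fst_add, Prod.snd_add]
    push_cast
    nlinarith
  calc znorm (l + m) = Real.sqrt (((l+m).1 : ℝ)^2 + ((l+m).2 : ℝ)^2) := rfl
    _ ≤ Real.sqrt ((znorm l + znorm m)^2) := Real.sqrt_le_sqrt hX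
    _ = znorm l + znorm m := Real.sqrt_sq (by linarith)

lemma znorm_neg (v : ℤ × ℤ) : znorm (-v) = znorm v := by
  unfold znorm
  congr 1
  rw [Prod.fst_neg, Prod.snd_neg]
  push_cast
  ring

/-- Key mean-value type inequality. -/
lemma key_ineq {s a b : ℝ} (hs : 0 ≤ s) (hb : 0 < b) (hba : b ≤ a) (hab : a ≤ 2 * b) :
    a ^ (2*s) - b ^ (2*s) ≤ (2*s*2^s + 1) * ((a - b) * (a ^ s * b ^ (s-1))) := by
  have ha : 0 < a := hb.trans_le hba
  have hC : (0:ℝ) ≤ 2*s*2^s := by positivity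
  have habs : a ^ s * b ^ (s-1) ≥ 0 := by positivity
  rcases le_or_gt 1 (2*s) with h1 | h1
  · -- convex case: a^(2s) - b^(2s) ≤ 2s (a-b) a^(2s-1)
    have hx : (-1:ℝ) ≤ (b - a) / a := by
      rw [le_div_iff₀ ha]; linarith
    have hbern := one_add_mul_self_le_rpow_one_add hx h1
    have h1x : 1 + (b - a)/a = b / a := by field_simp; ring
    rw [h1x] at hbern
    have hdiv : (b / a) ^ (2*s) = b ^ (2*s) / a ^ (2*s) :=
      Real.div_rpow hb.le ha.le _
    rw [hdiv] at hbern
    have ha2s : (0:ℝ) < a ^ (2*s) := Real.rpow_pos_of_pos ha _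
    -- multiply by a^(2s)
    have hmain : a ^ (2*s) - b ^ (2*s) ≤ 2*s * ((a - b) * (a ^ (2*s) / a)) := by
      have := mul_le_mul_of_nonneg_right hbern ha2s.le
      rw [div_mul_cancel₀ _ ha2s.ne'] at this
      have hexp : (1 + 2*s * ((b - a)/a)) * a ^ (2*s)
          = a ^ (2*s) - 2*s * ((a - b) * (a ^ (2*s) / a)) := by
        field_simp
        ring
      rw [hexp] at this
      linarith
    have he1 : a ^ (2*s) / a = a ^ s * a ^ (s - 1) := by
      have h2 := Real.rpow_sub ha (2*s) 1
      rw [Real.rpow_one] at h2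
      rw [← h2, show 2*s - 1 = s + (s-1) by ring, Real.rpow_add ha]
    have he2 : a ^ (s - 1) ≤ 2 ^ s * b ^ (s - 1) := by
      rcases le_or_gt 1 s with hs1 | hs1
      · calc a ^ (s-1) ≤ (2*b) ^ (s-1) :=
              Real.rpow_le_rpow ha.le hab (by linarith)
          _ = 2 ^ (s-1) * b ^ (s-1) := Real.mul_rpow (by norm_num) hb.le
          _ ≤ 2 ^ s * b ^ (s-1) := by
              have : (2:ℝ) ^ (s-1) ≤ 2 ^ s :=
                Real.rpow_le_rpow_of_exponent_le one_le_two (by linarith)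
              have hbp : (0:ℝ) ≤ b ^ (s-1) := by positivity
              nlinarith
      · calc a ^ (s-1) ≤ b ^ (s-1) :=
              Real.rpow_le_rpow_of_nonpos hb hba (by linarith)
          _ ≤ 2 ^ s * b ^ (s-1) := by
              have h2s : (1:ℝ) ≤ 2 ^ s := Real.one_le_rpow one_le_two hs
              have hbp : (0:ℝ) ≤ b ^ (s-1) := by positivity
              nlinarith
    calc a ^ (2*s) - b ^ (2*s) ≤ 2*s * ((a - b) * (a ^ (2*s) / a)) := hmain
      _ = 2*s * ((a - b) * (a ^ s * a ^ (s-1))) := by rw [he1]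
      _ ≤ 2*s * ((a - b) * (a ^ s * (2 ^ s * b ^ (s-1)))) := by
          have hab0 : (0:ℝ) ≤ a - b := sub_nonneg.2 hba
          gcongr
      _ ≤ (2*s*2^s + 1) * ((a - b) * (a ^ s * b ^ (s-1))) := by
          have hab0 : 0 ≤ a - b := sub_nonneg.2 hba
          have hbp : (0:ℝ) ≤ b ^ (s-1) := by positivity
          have hap : (0:ℝ) ≤ a ^ s := by positivity
          nlinarith [mul_nonneg (mul_nonneg hab0 hap) hbp]
  · -- concave case: a^(2s) - b^(2s) ≤ 2s (a-b) b^(2s-1)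
    have hx : (-1:ℝ) ≤ (a - b) / b := by
      have : (0:ℝ) ≤ (a - b) / b := div_nonneg (by linarith) hb.le
      linarith
    have hbern := rpow_one_add_le_one_add_mul_self hx (by linarith) h1.le
    have h1x : 1 + (a - b)/b = a / b := by field_simp; ring
    rw [h1x, Real.div_rpow ha.le hb.le _] at hbern
    have hb2s : (0:ℝ) < b ^ (2*s) := Real.rpow_pos_of_pos hb _
    have hmain : a ^ (2*s) - b ^ (2*s) ≤ 2*s * ((a - b) * (b ^ (2*s) / b)) := by
      have := mul_le_mul_of_nonneg_right hbern hb2s.le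
      rw [div_mul_cancel₀ _ hb2s.ne'] at this
      have hexp : (1 + 2*s * ((a - b)/b)) * b ^ (2*s)
          = b ^ (2*s) + 2*s * ((a - b) * (b ^ (2*s) / b)) := by
        field_simp
      rw [hexp] at this
      linarith
    have he1 : b ^ (2*s) / b = b ^ s * b ^ (s - 1) := by
      have h2 := Real.rpow_sub hb (2*s) 1
      rw [Real.rpow_one] at h2
      rw [← h2, show 2*s - 1 = s + (s-1) by ring, Real.rpow_add hb]
    have he2 : b ^ s ≤ a ^ s := Real.rpow_le_rpow hb.le hba hs
    calc a ^ (2*s) - b ^ (2*s) ≤ 2*s * ((a - b) * (b ^ (2*s) / b)) := hmain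
      _ = 2*s * ((a - b) * (b ^ s * b ^ (s-1))) := by rw [he1]
      _ ≤ (2*s*2^s + 1) * ((a - b) * (a ^ s * b ^ (s-1))) := by
          have hab0 : 0 ≤ a - b := sub_nonneg.2 hba
          have hbp : (0:ℝ) ≤ b ^ (s-1) := by positivity
          have hbs : (0:ℝ) ≤ b ^ s := by positivity
          have hap : (0:ℝ) ≤ a ^ s := by positivity
          have h2s : (1:ℝ) ≤ 2 ^ s := Real.one_le_rpow one_le_two hs
          nlinarith [mul_nonneg (mul_nonneg hab0 hap) hbp,
            mul_le_mul_of_nonneg_left he2 hbp,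
            mul_nonneg hab0 (mul_nonneg hbp (sub_nonneg.2 he2))]

theorem symmetrization_estimate_two (s β : ℝ) (hs : 0 ≤ s) (hβ1 : 1 / 2 < β) (hβ2 : β < 1) :
    ∃ C : ℝ, 0 < C ∧ ∀ l m k : ℤ × ℤ, l ≠ 0 → m ≠ 0 → k ≠ 0 → l + m + k = 0 →
      znorm l ≤ znorm m → znorm m ≤ znorm k →
      (1 / znorm l ^ (2 * β)) * (znorm k ^ (2 * s) - znorm m ^ (2 * s)) ≤
        C * znorm l ^ (1 - 2 * β) * znorm m ^ (s - 1) * znorm k ^ s := by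
  refine ⟨2*s*2^s + 1, by positivity, ?_⟩
  intro l m k hl hm hk hsum hlm hmk
  set a := znorm k
  set b := znorm m
  set c := znorm l
  have hc : 0 < c := znorm_pos hl
  have hb : 0 < b := znorm_pos hm
  have ha : 0 < a := znorm_pos hk
  have hcb : c ≤ b := hlm
  have hba : b ≤ a := hmk
  have htri : a ≤ c + b := by
    have hk' : k = -(l + m) := by
      exact eq_neg_of_add_eq_zero_right hsum
    calc a = znorm (l + m) := by show znorm k = _; rw [hk', znorm_neg]
      _ ≤ c + b := znorm_triangle l m
  have hab2 : a ≤ 2 * b := by linarith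
  have hkey := key_ineq hs hb hba hab2
  have hnum : a ^ (2*s) - b ^ (2*s) ≤ (2*s*2^s + 1) * c * b ^ (s-1) * a ^ s := by
    have h1 : a - b ≤ c := by linarith
    have hap : (0:ℝ) ≤ a ^ s := by positivity
    have hbp : (0:ℝ) ≤ b ^ (s-1) := by positivity
    have hC : (0:ℝ) ≤ 2*s*2^s + 1 := by positivity
    have hstep : (2*s*2^s + 1) * ((a - b) * (a ^ s * b ^ (s-1)))
        ≤ (2*s*2^s + 1) * (c * (a ^ s * b ^ (s-1))) := by
      apply mul_le_mul_of_nonneg_left _ hC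
      exact mul_le_mul_of_nonneg_right h1 (mul_nonneg hap hbp)
    have heq : (2*s*2^s + 1) * (c * (a ^ s * b ^ (s-1)))
        = (2*s*2^s + 1) * c * b ^ (s-1) * a ^ s := by ring
    linarith
  have hc2β : (0:ℝ) < c ^ (2*β) := Real.rpow_pos_of_pos hc _
  calc (1 / c ^ (2*β)) * (a ^ (2*s) - b ^ (2*s))
      = (a ^ (2*s) - b ^ (2*s)) / c ^ (2*β) := by ring
    _ ≤ ((2*s*2^s + 1) * c * b ^ (s-1) * a ^ s) / c ^ (2*β) := by gcongr
    _ = (2*s*2^s + 1) * c ^ (1 - 2*β) * b ^ (s-1) * a ^ s := by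
        rw [Real.rpow_sub hc, Real.rpow_one]
        ring
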